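/- Let A and B be symmetric positive definite n×n real matrices. Then for every vector u, the vector v = (A+B)^{-1} B u satisfies vᵀ A v ≤ uᵀ B u. (This is the key deluxe-scaling inequality arising from the generalized eigenvalue problem A φ = λ B φ.) -/

import Mathlib

open Matrix

/-- Key deluxe-scaling inequality: for SPD A, B and v = (A+B)⁻¹ B u, vᵀ A v ≤ uᵀ B u. -/
theorem deluxe_scaling_inequality (n : ℕ) (A B : Matrix (Fin n) (Fin n) ℝ)
    (hA : A.PosDef) (hB : B.PosDef) (u : Fin n → ℝ) :
    ((A + B)⁻¹ *ᵥ (B *ᵥ u)) ⬝ᵥ A *ᵥ ((A + B)⁻¹ *ᵥ (B *ᵥ u)) ≤ u ⬝ᵥ B *ᵥ u := by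
  set M := A + B with hMdef
  have hM : M.PosDef := hA.add hB
  set w := B *ᵥ u with hw
  set v := M⁻¹ *ᵥ w with hv
  have hBsymm : Bᵀ = B := by
    have := hB.isHermitian
    rwa [Matrix.IsHermitian, conjTranspose_eq_transpose_of_trivial] at this
  -- M v = w
  have hMv : M *ᵥ v = w := by
    rw [hv, mulVec_mulVec, Matrix.mul_nonsing_inv _ hM.det_pos.ne'.isUnit, one_mulVec]
  -- symmetry of B in dot products
  have hsym : ∀ x y : Fin n → ℝ, x ⬝ᵥ B *ᵥ y = y ⬝ᵥ B *ᵥ x := by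
    intro x y
    have h1 : x ᵥ* B = B *ᵥ x := by rw [← mulVec_transpose, hBsymm]
    rw [dotProduct_mulVec, h1, dotProduct_comm]
  -- v ⬝ w = u ⬝ B v and nonneg
  have hvw : v ⬝ᵥ w = w ⬝ᵥ M⁻¹ *ᵥ w := dotProduct_comm v w ▸ by
    rw [hv, dotProduct_comm]
  have ht0 : 0 ≤ v ⬝ᵥ w := by
    rw [hvw]
    have := hM.inv.posSemidef.dotProduct_mulVec_nonneg w
    simpa using this
  -- expand vᵀ A v
  have hAv : v ⬝ᵥ A *ᵥ v = v ⬝ᵥ w - v ⬝ᵥ B *ᵥ v := by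
    have : A *ᵥ v = M *ᵥ v - B *ᵥ v := by
      rw [hMdef, add_mulVec]; abel
    rw [this, dotProduct_sub, hMv]
  -- Cauchy-type: (u - v)ᵀ B (u - v) ≥ 0
  have hq : 0 ≤ (u - v) ⬝ᵥ B *ᵥ (u - v) := hB.posSemidef.dotProduct_mulVec_nonneg (u - v) |>.trans_eq (by simp)
    |>.trans_eq rfl
  have hexp : (u - v) ⬝ᵥ B *ᵥ (u - v)
      = u ⬝ᵥ B *ᵥ u - u ⬝ᵥ B *ᵥ v - v ⬝ᵥ B *ᵥ u + v ⬝ᵥ B *ᵥ v := by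
    rw [mulVec_sub, dotProduct_sub, sub_dotProduct, sub_dotProduct]; ring
  have hvw' : v ⬝ᵥ w = u ⬝ᵥ B *ᵥ v := by rw [hw, hsym u v]
  have huv : v ⬝ᵥ B *ᵥ u = u ⬝ᵥ B *ᵥ v := hsym v u
  rw [hAv]
  nlinarith [hq, hexp, ht0, hvw', huv]
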